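/- arXiv:1112.5087 — 2 statements merged into one kernel-verified Lean document; each statement's English description precedes it below -/
import Mathlib

section
/- Let μ be a Borel probability measure on ℝ with m_8(μ) < ∞, m_1(μ) = 0 and m_2(μ) = 1, and let T_n^{(-1)}(z) = z − ((n−1)/√n) ∫_{|u| ≤ √(n−1)/π} (u − z√n)^{-1} τ(du) be the inverse function of T_n. Then there exist c(μ) > 0 and n₁ = n₁(μ) ∈ ℕ such that for all n ≥ n₁ and all z₁, z₂ ∈ T_n(ℂ⁺): |T_n^{(-1)}(z₁) − T_n^{(-1)}(z₂)| ≤ c(μ) |z₁ − z₂|. -/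
open MeasureTheory Complex Filter Set
open scoped Topology

noncomputable section

namespace FreeCLT

def mom (μ : Measure ℝ) (k : ℕ) : ℝ := ∫ u, u ^ k ∂μ

def cauchy (μ : Measure ℝ) (z : ℂ) : ℂ := ∫ u, (z - (u : ℂ))⁻¹ ∂μ

def recip (μ : Measure ℝ) (z : ℂ) : ℂ := (cauchy μ z)⁻¹

def MemF (F : ℂ → ℂ) : Prop :=
  ∃ ν : Measure ℝ, IsProbabilityMeasure ν ∧ ∀ z : ℂ, 0 < z.im → F z = recip ν z

def Subord (μ : Measure ℝ) (n : ℕ) (Z : ℂ → ℂ) : Prop :=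
  MemF Z ∧ ∀ z : ℂ, 0 < z.im →
    z = (n : ℂ) * Z z - ((n : ℂ) - 1) * recip μ (Z z)

def IsBoxPow (μ : Measure ℝ) (n : ℕ) (Z : ℂ → ℂ) (ν : Measure ℝ) : Prop :=
  Subord μ n Z ∧ IsProbabilityMeasure ν ∧
    ∀ z : ℂ, 0 < z.im → recip ν z = recip μ (Z z)

def rescale (n : ℕ) (ν : Measure ℝ) : Measure ℝ :=
  ν.map (fun x => x / Real.sqrt n)

def HasDensity (ν : Measure ℝ) (p : ℝ → ℝ) : Prop :=
  Continuous p ∧ (∀ x, 0 ≤ p x) ∧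
    ν = MeasureTheory.volume.withDensity (fun x => ENNReal.ofReal (p x))

def aQ (μ : Measure ℝ) (n : ℕ) : ℝ := mom μ 3 / Real.sqrt n
def bQ (μ : Measure ℝ) (n : ℕ) : ℝ := (mom μ 4 - (mom μ 3) ^ 2 - 1) / n
def dQ (μ : Measure ℝ) (n : ℕ) : ℝ := (mom μ 4 - (mom μ 3) ^ 2) / n
def eQ (μ : Measure ℝ) (n : ℕ) : ℝ := (1 - bQ μ n) / Real.sqrt (1 - dQ μ n)

def pw (x : ℝ) : ℝ := (1 / (2 * Real.pi)) * Real.sqrt (max (4 - x ^ 2) 0)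

def truncSet (n : ℕ) : Set ℝ := {u : ℝ | |u| ≤ Real.sqrt ((n : ℝ) - 1) / Real.pi}

def Tfun (W : ℕ → ℂ → ℂ) (n : ℕ) (z : ℂ) : ℂ :=
  W n ((Real.sqrt (n : ℝ) : ℂ) * z) / (Real.sqrt (n : ℝ) : ℂ)

def Tinv (τ : Measure ℝ) (n : ℕ) (z : ℂ) : ℂ :=
  z - (((n : ℂ) - 1) / (Real.sqrt (n : ℝ) : ℂ)) *
    ∫ u in truncSet n, ((u : ℂ) - z * (Real.sqrt (n : ℝ) : ℂ))⁻¹ ∂τ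

def Sinv (τ : Measure ℝ) (n : ℕ) (z : ℂ) : ℂ :=
  z - (((n : ℂ) - 1) / (Real.sqrt (n : ℝ) : ℂ)) *
    ∫ u, ((u : ℂ) - z * (Real.sqrt (n : ℝ) : ℂ))⁻¹ ∂τ

lemma sub_ne' {v : ℂ} (hv : v.im ≠ 0) (u : ℝ) : ((u:ℂ) - v) ≠ 0 := by
  intro h
  apply hv
  have := congrArg Complex.im h
  simpa using this.symm

lemma norm_inv_le {v : ℂ} (hv : v.im ≠ 0) (u : ℝ) :
    ‖((u:ℂ) - v)⁻¹‖ ≤ |v.im|⁻¹ := by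
  rw [norm_inv]
  apply inv_anti₀ (abs_pos.mpr hv)
  calc |v.im| = |((u:ℂ) - v).im| := by simp
    _ ≤ ‖((u:ℂ) - v)‖ := Complex.abs_im_le_norm _
    _ = ‖((u:ℂ) - v)‖ := rfl

lemma integrable_inv (ν : Measure ℝ) [IsFiniteMeasure ν] {v : ℂ} (hv : v.im ≠ 0) :
    Integrable (fun u : ℝ => ((u:ℂ) - v)⁻¹) ν := by
  have hc : Continuous fun u : ℝ => ((u:ℂ) - v)⁻¹ :=
    (Complex.continuous_ofReal.sub continuous_const).inv₀ (fun u => sub_ne' hv u)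
  refine ⟨hc.aestronglyMeasurable, ?_⟩
  exact HasFiniteIntegral.of_bounded (C := |v.im|⁻¹) (ae_of_all _ (norm_inv_le hv))

lemma nsq_pos {v : ℂ} (hv : v.im ≠ 0) (u : ℝ) : 0 < Complex.normSq ((u:ℂ) - v) :=
  Complex.normSq_pos.mpr (sub_ne' hv u)

lemma nsq_inv_le {v : ℂ} (hv : v.im ≠ 0) (u : ℝ) :
    (Complex.normSq ((u:ℂ) - v))⁻¹ ≤ (v.im ^ 2)⁻¹ := by
  apply inv_anti₀ (by positivity)
  calc v.im ^ 2 = (((u:ℂ) - v).im) ^ 2 := by simp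
    _ ≤ (((u:ℂ) - v).re) ^ 2 + (((u:ℂ) - v).im) ^ 2 := by nlinarith [sq_nonneg (((u:ℂ) - v).re)]
    _ = Complex.normSq ((u:ℂ) - v) := by rw [Complex.normSq_apply]; ring

lemma integrable_nsq_inv (ν : Measure ℝ) [IsFiniteMeasure ν] {v : ℂ} (hv : v.im ≠ 0) :
    Integrable (fun u : ℝ => (Complex.normSq ((u:ℂ) - v))⁻¹) ν := by
  have hc : Continuous fun u : ℝ => (Complex.normSq ((u:ℂ) - v))⁻¹ :=
    (Complex.continuous_normSq.comp (Complex.continuous_ofReal.sub continuous_const)).inv₀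
      (fun u => (nsq_pos hv u).ne')
  refine ⟨hc.aestronglyMeasurable, ?_⟩
  apply HasFiniteIntegral.of_bounded (C := (v.im ^ 2)⁻¹)
  filter_upwards with u
  rw [Real.norm_eq_abs, abs_of_pos (inv_pos.mpr (nsq_pos hv u))]
  exact nsq_inv_le hv u

lemma im_integral_inv (ν : Measure ℝ) [IsFiniteMeasure ν] {v : ℂ} (hv : v.im ≠ 0) :
    (∫ u : ℝ, ((u:ℂ) - v)⁻¹ ∂ν).im = v.im * ∫ u : ℝ, (Complex.normSq ((u:ℂ) - v))⁻¹ ∂ν := by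
  have h1 := _root_.integral_im (μ := ν) (integrable_inv ν hv)
  simp only [RCLike.im_to_complex] at h1
  rw [← h1, ← MeasureTheory.integral_const_mul]
  congr 1
  funext u
  rw [Complex.inv_im]
  have : ((u:ℂ) - v).im = -v.im := by simp
  rw [this]
  field_simp

lemma recip_im_pos (ν : Measure ℝ) [IsProbabilityMeasure ν] {z : ℂ} (hz : 0 < z.im) :
    0 < (recip ν z).im := by
  have hv : z.im ≠ 0 := hz.ne'
  have hG : cauchy ν z = - ∫ u : ℝ, ((u:ℂ) - z)⁻¹ ∂ν := by
    rw [cauchy, ← MeasureTheory.integral_neg]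
    congr 1; funext u; rw [← inv_neg]; ring_nf
  have hr : 0 < ∫ u : ℝ, (Complex.normSq ((u:ℂ) - z))⁻¹ ∂ν := by
    rw [MeasureTheory.integral_pos_iff_support_of_nonneg
      (fun u => (inv_pos.mpr (nsq_pos hv u)).le) (integrable_nsq_inv ν hv)]
    have : Function.support (fun u : ℝ => (Complex.normSq ((u:ℂ) - z))⁻¹) = Set.univ := by
      ext u; simp [Function.mem_support, sub_ne' hv u]
    rw [this]
    simp
  have hGim : (cauchy ν z).im < 0 := by
    rw [hG, Complex.neg_im, im_integral_inv ν hv]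
    nlinarith
  have hG0 : cauchy ν z ≠ 0 := fun h => by simp [h] at hGim
  rw [recip, Complex.inv_im]
  have : 0 < Complex.normSq (cauchy ν z) := Complex.normSq_pos.mpr hG0
  exact div_pos (neg_pos.mpr hGim) this


theorem stmt_15
    (μ : Measure ℝ) [IsProbabilityMeasure μ]
    (h8 : Integrable (fun u => u ^ 8) μ)
    (h1 : mom μ 1 = 0) (h2 : mom μ 2 = 1)
    (τ : Measure ℝ) [IsProbabilityMeasure τ]
    (hτ : ∀ z : ℂ, 0 < z.im → recip μ z = z + ∫ u, ((u : ℂ) - z)⁻¹ ∂τ)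
    (μs : ℕ → Measure ℝ) (hμsP : ∀ n : ℕ, IsProbabilityMeasure (μs n))
    (hμs : ∀ n : ℕ, ∀ z : ℂ, 0 < z.im →
      recip (μs n) z = z + ∫ u in truncSet n, ((u : ℂ) - z)⁻¹ ∂τ)
    (W : ℕ → ℂ → ℂ) (νs : ℕ → Measure ℝ)
    (hboxW : ∀ n : ℕ, 1 ≤ n → IsBoxPow (μs n) n (W n) (νs n)) :
    ∃ c : ℝ, 0 < c ∧ ∃ n₁ : ℕ, ∀ n : ℕ, n₁ ≤ n → ∀ z₁ z₂ : ℂ,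
      z₁ ∈ Tfun W n '' {z : ℂ | 0 < z.im} → z₂ ∈ Tfun W n '' {z : ℂ | 0 < z.im} →
      ‖Tinv τ n z₁ - Tinv τ n z₂‖ ≤ c * ‖z₁ - z₂‖ := by
  refine ⟨2, by norm_num, 2, ?_⟩
  intro n hn z₁ z₂ hz₁ hz₂
  have hn1 : (1:ℕ) ≤ n := le_trans (by norm_num) hn
  have hnR : (2:ℝ) ≤ (n:ℝ) := by exact_mod_cast hn
  have hsq : (0:ℝ) < Real.sqrt (n:ℝ) := Real.sqrt_pos.mpr (by linarith)
  have hsqC : (Real.sqrt (n:ℝ) : ℂ) ≠ 0 := by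
    simpa using hsq.ne'
  obtain ⟨⟨hmemF, hsub⟩, -, -⟩ := hboxW n hn1
  haveI := hμsP n
  have key : ∀ z : ℂ, z ∈ Tfun W n '' {z : ℂ | 0 < z.im} →
      0 < (z * (Real.sqrt (n:ℝ) : ℂ)).im ∧
      ((n:ℝ) - 1) * ∫ u in truncSet n,
        (Complex.normSq ((u:ℂ) - z * (Real.sqrt (n:ℝ) : ℂ)))⁻¹ ∂τ ≤ 1 := by
    rintro z ⟨w, hw, rfl⟩
    simp only [Set.mem_setOf_eq] at hw
    have hζ : 0 < ((Real.sqrt (n:ℝ) : ℂ) * w).im := by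
      rw [Complex.mul_im]
      simp only [Complex.ofReal_re, Complex.ofReal_im, zero_mul, add_zero]
      positivity
    set ζ : ℂ := (Real.sqrt (n:ℝ) : ℂ) * w with hζdef
    set v : ℂ := W n ζ with hvdef
    obtain ⟨ν, hνP, hνeq⟩ := hmemF
    haveI := hνP
    have hvim : 0 < v.im := by rw [hvdef, hνeq ζ hζ]; exact recip_im_pos ν hζ
    have hvz : Tfun W n w * (Real.sqrt (n:ℝ) : ℂ) = v := by
      rw [Tfun]; rw [div_mul_cancel₀ _ hsqC]
    rw [hvz]
    refine ⟨hvim, ?_⟩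
    have hEq := hsub ζ hζ
    rw [hμs n v hvim] at hEq
    set r : ℝ := ∫ u in truncSet n, (Complex.normSq ((u:ℂ) - v))⁻¹ ∂τ with hrdef
    have hIim : (∫ u in truncSet n, ((u:ℂ) - v)⁻¹ ∂τ).im = v.im * r :=
      im_integral_inv _ hvim.ne'
    have him : ζ.im = (n:ℝ) * v.im - ((n:ℝ) - 1) * (v.im + v.im * r) := by
      rw [hEq]
      simp only [Complex.sub_im, Complex.mul_im, Complex.add_im, Complex.add_re,
        Complex.natCast_re, Complex.natCast_im, Complex.one_re, Complex.one_im,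
        Complex.sub_re, hIim]
      ring
    have hrnn : 0 ≤ r := by
      rw [hrdef]
      exact MeasureTheory.integral_nonneg (fun u => (inv_pos.mpr (nsq_pos hvim.ne' u)).le)
    nlinarith [hζ, hvim, him, hrnn]
  obtain ⟨h1im, h1key⟩ := key z₁ hz₁
  obtain ⟨h2im, h2key⟩ := key z₂ hz₂
  set v₁ : ℂ := z₁ * (Real.sqrt (n:ℝ) : ℂ) with hv₁
  set v₂ : ℂ := z₂ * (Real.sqrt (n:ℝ) : ℂ) with hv₂
  have hf₁ : Integrable (fun u : ℝ => ((u:ℂ) - v₁)⁻¹) (τ.restrict (truncSet n)) :=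
    integrable_inv _ h1im.ne'
  have hf₂ : Integrable (fun u : ℝ => ((u:ℂ) - v₂)⁻¹) (τ.restrict (truncSet n)) :=
    integrable_inv _ h2im.ne'
  have hg₁ : Integrable (fun u : ℝ => (Complex.normSq ((u:ℂ) - v₁))⁻¹) (τ.restrict (truncSet n)) :=
    integrable_nsq_inv _ h1im.ne'
  have hg₂ : Integrable (fun u : ℝ => (Complex.normSq ((u:ℂ) - v₂))⁻¹) (τ.restrict (truncSet n)) :=
    integrable_nsq_inv _ h2im.ne'
  have hprod : Integrable (fun u : ℝ => ((u:ℂ) - v₁)⁻¹ * ((u:ℂ) - v₂)⁻¹)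
      (τ.restrict (truncSet n)) := by
    refine ⟨hf₁.1.mul hf₂.1, ?_⟩
    apply HasFiniteIntegral.of_bounded (C := |v₁.im|⁻¹ * |v₂.im|⁻¹)
    filter_upwards with u
    rw [norm_mul]
    exact mul_le_mul (norm_inv_le h1im.ne' u) (norm_inv_le h2im.ne' u)
      (norm_nonneg _) (by positivity)
  set J : ℂ := ∫ u in truncSet n, ((u:ℂ) - v₁)⁻¹ * ((u:ℂ) - v₂)⁻¹ ∂τ with hJdef
  have hpt : ∀ u : ℝ, ((u:ℂ) - v₁)⁻¹ - ((u:ℂ) - v₂)⁻¹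
      = (v₁ - v₂) * (((u:ℂ) - v₁)⁻¹ * ((u:ℂ) - v₂)⁻¹) := by
    intro u
    field_simp [sub_ne' h1im.ne' u, sub_ne' h2im.ne' u]
    ring
  have hint : (∫ u in truncSet n, ((u:ℂ) - v₁)⁻¹ ∂τ) - (∫ u in truncSet n, ((u:ℂ) - v₂)⁻¹ ∂τ)
      = (v₁ - v₂) * J := by
    rw [← MeasureTheory.integral_sub hf₁ hf₂]
    simp_rw [hpt]
    rw [MeasureTheory.integral_const_mul, hJdef]
  have hdiff : Tinv τ n z₁ - Tinv τ n z₂ = (z₁ - z₂) * (1 - ((n:ℂ) - 1) * J) := by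
    rw [Tinv, Tinv, ← hv₁, ← hv₂]
    have h5 : (z₁ - (((n:ℂ) - 1) / (Real.sqrt (n:ℝ) : ℂ)) *
        (∫ u in truncSet n, ((u:ℂ) - v₁)⁻¹ ∂τ)) -
        (z₂ - (((n:ℂ) - 1) / (Real.sqrt (n:ℝ) : ℂ)) *
        (∫ u in truncSet n, ((u:ℂ) - v₂)⁻¹ ∂τ))
        = (z₁ - z₂) - (((n:ℂ) - 1) / (Real.sqrt (n:ℝ) : ℂ)) * ((v₁ - v₂) * J) := by
      rw [← hint]; ring
    rw [h5, hv₁, hv₂]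
    field_simp
  rw [hdiff, norm_mul]
  have habsn : ‖((n:ℂ) - 1)‖ = (n:ℝ) - 1 := by
    have hcast : ((n:ℂ) - 1) = ((((n:ℝ) - 1 : ℝ)) : ℂ) := by push_cast; ring
    rw [hcast, Complex.norm_real, Real.norm_eq_abs, _root_.abs_of_nonneg (by linarith)]
  have hJbound : ‖J‖ ≤ ((∫ u in truncSet n, (Complex.normSq ((u:ℂ) - v₁))⁻¹ ∂τ)
      + (∫ u in truncSet n, (Complex.normSq ((u:ℂ) - v₂))⁻¹ ∂τ)) / 2 := by
    have hb1 : ‖J‖ ≤ ∫ u in truncSet n, ‖((u:ℂ) - v₁)⁻¹ * ((u:ℂ) - v₂)⁻¹‖ ∂τ := by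
      rw [hJdef]
      exact MeasureTheory.norm_integral_le_integral_norm _
    have hb2 : (∫ u in truncSet n, ‖((u:ℂ) - v₁)⁻¹ * ((u:ℂ) - v₂)⁻¹‖ ∂τ)
        ≤ ∫ u in truncSet n, ((Complex.normSq ((u:ℂ) - v₁))⁻¹
          + (Complex.normSq ((u:ℂ) - v₂))⁻¹) / 2 ∂τ := by
      apply MeasureTheory.integral_mono hprod.norm ((hg₁.add hg₂).div_const 2)
      intro u
      have e1 : ‖((u:ℂ) - v₁)⁻¹‖ ^ 2 = (Complex.normSq ((u:ℂ) - v₁))⁻¹ := by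
        rw [norm_inv, inv_pow, Complex.normSq_eq_norm_sq]
      have e2 : ‖((u:ℂ) - v₂)⁻¹‖ ^ 2 = (Complex.normSq ((u:ℂ) - v₂))⁻¹ := by
        rw [norm_inv, inv_pow, Complex.normSq_eq_norm_sq]
      calc ‖((u:ℂ) - v₁)⁻¹ * ((u:ℂ) - v₂)⁻¹‖
          = ‖((u:ℂ) - v₁)⁻¹‖ * ‖((u:ℂ) - v₂)⁻¹‖ := norm_mul _ _
        _ ≤ (‖((u:ℂ) - v₁)⁻¹‖ ^ 2 + ‖((u:ℂ) - v₂)⁻¹‖ ^ 2) / 2 := by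
            nlinarith [sq_nonneg (‖((u:ℂ) - v₁)⁻¹‖ - ‖((u:ℂ) - v₂)⁻¹‖)]
        _ = ((Complex.normSq ((u:ℂ) - v₁))⁻¹ + (Complex.normSq ((u:ℂ) - v₂))⁻¹) / 2 := by
            rw [e1, e2]
    have hb3 : (∫ u in truncSet n, ((Complex.normSq ((u:ℂ) - v₁))⁻¹
          + (Complex.normSq ((u:ℂ) - v₂))⁻¹) / 2 ∂τ)
        = ((∫ u in truncSet n, (Complex.normSq ((u:ℂ) - v₁))⁻¹ ∂τ)
          + (∫ u in truncSet n, (Complex.normSq ((u:ℂ) - v₂))⁻¹ ∂τ)) / 2 := by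
      rw [MeasureTheory.integral_div, MeasureTheory.integral_add hg₁ hg₂]
    linarith [hb1, hb2.trans_eq hb3]
  have habsJ : ((n:ℝ) - 1) * ‖J‖ ≤ 1 := by
    have hm := mul_le_mul_of_nonneg_left hJbound (show (0:ℝ) ≤ (n:ℝ) - 1 by linarith)
    nlinarith [h1key, h2key]
  have hfac : ‖1 - ((n:ℂ) - 1) * J‖ ≤ 2 := by
    have h4 : ‖1 - ((n:ℂ) - 1) * J‖ ≤ 1 + ((n:ℝ) - 1) * ‖J‖ := by
      calc ‖1 - ((n:ℂ) - 1) * J‖ ≤ ‖(1:ℂ)‖ + ‖((n:ℂ) - 1) * J‖ := norm_sub_le _ _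
        _ = 1 + ((n:ℝ) - 1) * ‖J‖ := by
            rw [norm_one, norm_mul, habsn]
    linarith
  calc ‖z₁ - z₂‖ * ‖1 - ((n:ℂ) - 1) * J‖
      ≤ ‖z₁ - z₂‖ * 2 :=
        mul_le_mul_of_nonneg_left hfac (norm_nonneg _)
    _ = 2 * ‖z₁ - z₂‖ := by ring

end FreeCLT
end
end

section
/- Let μ be a Borel probability measure on ℝ with m_8(μ) < ∞, m_1(μ) = 0 and m_2(μ) = 1, and let h = c₂(μ) n^{−3/2} and Î_n = {x ∈ ℝ : |x − a_n| ≤ 2/e_n − h}. Then there exist c(μ) > 0 and n₁ = n₁(μ) ∈ ℕ such that for all n ≥ n₁ and all x₁, x₂ ∈ Î_n: |T_n(x₁) − T_n(x₂)| ≤ c(μ) ( |x₁ − x₂| + n^{−3/2} ) / min_{j=1,2} √(4 − (e_n(x_j − a_n))²). -/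
open MeasureTheory Complex Filter Set
open scoped Topology

noncomputable section

namespace FreeCLT

lemma im_recip_ge (ν : Measure ℝ) [IsProbabilityMeasure ν] (z : ℂ) (hz : 0 < z.im) :
    z.im ≤ (recip ν z).im := by
  have hne : ∀ u : ℝ, z - (u : ℂ) ≠ 0 := by
    intro u h
    have : (z - (u : ℂ)).im = z.im := by simp
    rw [h] at this; simp at this; linarith
  set f : ℝ → ℂ := fun u => (z - (u : ℂ))⁻¹ with hf
  have hfc : Continuous f := ((continuous_const.sub Complex.continuous_ofReal).inv₀ hne)
  have habs : ∀ u : ℝ, ‖(z - (u:ℂ))‖ ≥ z.im := by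
    intro u
    calc z.im = |(z - (u:ℂ)).im| := by simp [abs_of_pos hz]
    _ ≤ ‖(z - (u:ℂ))‖ := Complex.abs_im_le_norm _
  have hbound : ∀ u : ℝ, ‖f u‖ ≤ (z.im)⁻¹ := by
    intro u
    rw [hf]
    simp only [norm_inv]
    exact inv_anti₀ hz (habs u)
  have hint : Integrable f ν :=
    Integrable.mono' (integrable_const (z.im)⁻¹) hfc.aestronglyMeasurable
      (Filter.Eventually.of_forall hbound)
  set g : ℝ → ℝ := fun u => ‖f u‖ with hg
  have hgc : Continuous g := hfc.norm
  have hgint : Integrable g ν := hint.norm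
  have hg2int : Integrable (fun u => g u ^ 2) ν := by
    apply Integrable.mono' (integrable_const ((z.im)⁻¹^2)) (hgc.pow 2).aestronglyMeasurable
    filter_upwards with u
    have h1 : (0:ℝ) ≤ g u := norm_nonneg _
    have := hbound u
    simp only [Real.norm_eq_abs, Pi.pow_apply, _root_.abs_of_nonneg (pow_nonneg h1 2)]
    exact pow_le_pow_left₀ h1 this 2
  have hCS : (∫ u, g u ∂ν) ^ 2 ≤ ∫ u, g u ^ 2 ∂ν := by
    set c := ∫ u, g u ∂ν with hc
    have h0 : 0 ≤ ∫ u, (g u - c)^2 ∂ν := integral_nonneg (fun u => sq_nonneg _)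
    have hexpand : ∫ u, (g u - c)^2 ∂ν = (∫ u, g u ^2 ∂ν) - c^2 := by
      have : ∀ u, (g u - c)^2 = g u ^2 - (2*c) * g u + c^2 := by intro u; ring
      rw [integral_congr_ae (Filter.Eventually.of_forall this)]
      rw [integral_add (by exact (hg2int.sub (hgint.const_mul (2*c)))) (integrable_const _)]
      rw [integral_sub hg2int (hgint.const_mul (2*c))]
      rw [MeasureTheory.integral_const_mul]
      simp [← hc]
      ring
    linarith [hexpand ▸ h0]
  have himint : (cauchy ν z).im = ∫ u, (f u).im ∂ν := by
    rw [cauchy, ← hf]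
    exact (ContinuousLinearMap.integral_comp_comm Complex.imCLM hint).symm
  have hfim : ∀ u : ℝ, (f u).im = - z.im / Complex.normSq (z - (u:ℂ)) := by
    intro u; rw [hf]; simp [Complex.inv_im]
  have hfabs2 : ∀ u : ℝ, g u ^ 2 = (Complex.normSq (z - (u:ℂ)))⁻¹ := by
    intro u
    rw [hg, hf]
    simp only [norm_inv, inv_pow]
    rw [Complex.sq_norm]
  have hIm : (cauchy ν z).im = - z.im * ∫ u, (Complex.normSq (z - (u:ℂ)))⁻¹ ∂ν := by
    rw [himint, integral_congr_ae (Filter.Eventually.of_forall hfim)]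
    rw [show (fun u : ℝ => - z.im / Complex.normSq (z - (u:ℂ))) = fun u : ℝ => (-z.im) * (Complex.normSq (z - (u:ℂ)))⁻¹ by funext u; ring]
    rw [MeasureTheory.integral_const_mul]
  have hnormSqint : Integrable (fun u : ℝ => (Complex.normSq (z - (u:ℂ)))⁻¹) ν := by
    have := hg2int
    apply this.congr
    filter_upwards with u
    exact hfabs2 u
  have hpos : 0 < ∫ u, (Complex.normSq (z - (u:ℂ)))⁻¹ ∂ν := by
    rw [integral_pos_iff_support_of_nonneg_ae _ hnormSqint]
    · have : Function.support (fun u : ℝ => (Complex.normSq (z - (u:ℂ)))⁻¹) = Set.univ := by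
        ext u
        simp only [Function.mem_support, Set.mem_univ, iff_true, ne_eq, inv_eq_zero,
          Complex.normSq_eq_zero]
        exact hne u
      rw [this]; simp
    · filter_upwards with u
      exact inv_nonneg.mpr (Complex.normSq_nonneg _)
  have hImneg : (cauchy ν z).im < 0 := by
    rw [hIm]; nlinarith
  have hGne : cauchy ν z ≠ 0 := fun h => by rw [h] at hImneg; simp at hImneg
  have habs2 : Complex.normSq (cauchy ν z) ≤ ∫ u, (Complex.normSq (z - (u:ℂ)))⁻¹ ∂ν := by
    have h1 : ‖(cauchy ν z)‖ ≤ ∫ u, g u ∂ν := by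
      rw [cauchy, ← hf]
      exact norm_integral_le_integral_norm f
    have h2 : Complex.normSq (cauchy ν z) = ‖(cauchy ν z)‖ ^ 2 := (Complex.sq_norm _).symm
    have h3 : (∫ u, g u ∂ν)^2 ≤ ∫ u, (Complex.normSq (z - (u:ℂ)))⁻¹ ∂ν := by
      rw [← integral_congr_ae (Filter.Eventually.of_forall hfabs2)]
      exact hCS
    have h4 : ‖(cauchy ν z)‖ ^ 2 ≤ (∫ u, g u ∂ν)^2 :=
      pow_le_pow_left₀ (norm_nonneg _) h1 2
    linarith
  rw [recip, Complex.inv_im]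
  have hS : (0:ℝ) < Complex.normSq (cauchy ν z) := Complex.normSq_pos.mpr hGne
  rw [le_div_iff₀ hS]
  nlinarith [hIm]


private lemma auxq (E H T : ℝ) (hE : 0 < E) (hH : 0 < H) (hEH : E*H ≤ 2)
    (hT : |E*T| ≤ 2 - E*H) : 2*(E*H) ≤ 4 - (E*T)^2 := by
  have h1 : (E*T)^2 ≤ (2-E*H)^2 := by nlinarith [_root_.sq_abs (E*T), abs_nonneg (E*T)]
  nlinarith [mul_pos hE hH]

private lemma auxim (re im b1 d1 E t eps : ℝ) (h1 : re^2 - im^2 = b1^2*(t^2-eps^2) - 4*d1)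
    (hid : E^2*d1 = b1^2) (hd1 : 0 ≤ d1) : d1*(4-(E*t)^2) ≤ im^2 := by
  nlinarith [sq_nonneg re, sq_nonneg (b1*eps)]

private lemma auxpos (mi b eps : ℝ) (h : eps ≤ mi) (hb : b ≤ 1/2) (he : 0 < eps) :
    0 < 2*mi - (1+b)*eps := by nlinarith

private lemma auxhalf (S m mm im : ℝ) (h1 : S*m ≤ im) (hS : 1/2 ≤ S) (hmm : mm ≤ m)
    (hm : 0 < m) : mm/2 ≤ im := by nlinarith

private lemma auxsq (t : ℝ) (h1 : 1/2 ≤ t) (h2 : t ≤ 3/2) : t^2 ≤ 9/4 := by nlinarith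

private lemma auxcomb (t u : ℝ) (ht : 0 ≤ t) (hu : u ≤ 2) (hu0 : 0 < u) :
    (3/2)*t*u + 32*t ≤ 18*t*2 := by nlinarith

private lemma auxre (E t eps : ℝ) : 4-(E*t)^2 ≤ -(E^2*(t^2-eps^2) - 4) := by
  nlinarith [sq_nonneg (E*eps)]

private lemma auxfin (t p c' : ℝ) (ht : 0 ≤ t) (hp : 0 ≤ p) (hc : 0 < c') :
    18*t + 2*(c'*p) ≤ (18+2*c')*(t+p) := by nlinarith

set_option maxHeartbeats 1000000

theorem stmt_17
    (μ : Measure ℝ) [IsProbabilityMeasure μ]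
    (h8 : Integrable (fun u => u ^ 8) μ)
    (h1 : mom μ 1 = 0) (h2 : mom μ 2 = 1)
    (τ : Measure ℝ) [IsProbabilityMeasure τ]
    (hτ : ∀ z : ℂ, 0 < z.im → recip μ z = z + ∫ u, ((u : ℂ) - z)⁻¹ ∂τ)
    (μs : ℕ → Measure ℝ) (hμsP : ∀ n : ℕ, IsProbabilityMeasure (μs n))
    (hμs : ∀ n : ℕ, ∀ z : ℂ, 0 < z.im →
      recip (μs n) z = z + ∫ u in truncSet n, ((u : ℂ) - z)⁻¹ ∂τ)
    (W : ℕ → ℂ → ℂ) (νs : ℕ → Measure ℝ)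
    (hboxW : ∀ n : ℕ, 1 ≤ n → IsBoxPow (μs n) n (W n) (νs n))
    (M : ℕ → ℂ → ℂ)
    (hMF : ∀ᶠ n in atTop, MemF (M n))
    (hMeq : ∀ᶠ n in atTop, ∀ z : ℂ, 0 < z.im →
      (2 * (M n z - (aQ μ n : ℂ)) - (1 + (bQ μ n : ℂ)) * (z - (aQ μ n : ℂ))) ^ 2
        = (1 - (bQ μ n : ℂ)) ^ 2 * (z - (aQ μ n : ℂ)) ^ 2 - 4 * (1 - (dQ μ n : ℂ)))
    (c₂ : ℝ) (hc₂ : 0 < c₂)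
    (hexp : ∃ c' : ℝ, 0 < c' ∧ ∀ᶠ n in atTop, ∀ z : ℂ,
      0 < z.im → z.im ≤ 3 → |z.re - aQ μ n| ≤ 2 / eQ μ n - c₂ * (n : ℝ) ^ (-(3 / 2) : ℝ) →
      ‖Tfun W n z - M n z‖
        ≤ c' / ((n : ℝ) ^ ((3 : ℝ) / 2) *
            Real.sqrt ‖((eQ μ n : ℂ) * (z - (aQ μ n : ℂ))) ^ 2 - 4‖))
    (Tb : ℕ → ℂ → ℂ)
    (hTb : ∀ᶠ n in atTop, ContinuousOn (Tb n) {z : ℂ | 0 ≤ z.im} ∧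
      ∀ z : ℂ, 0 < z.im → Tb n z = Tfun W n z) :
    ∃ c : ℝ, 0 < c ∧ ∃ n₁ : ℕ, ∀ n : ℕ, n₁ ≤ n → ∀ x₁ x₂ : ℝ,
      |x₁ - aQ μ n| ≤ 2 / eQ μ n - c₂ * (n : ℝ) ^ (-(3 / 2) : ℝ) →
      |x₂ - aQ μ n| ≤ 2 / eQ μ n - c₂ * (n : ℝ) ^ (-(3 / 2) : ℝ) →
      ‖Tb n (x₁ : ℂ) - Tb n (x₂ : ℂ)‖
        ≤ c * (|x₁ - x₂| + (n : ℝ) ^ (-(3 / 2) : ℝ)) /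
            min (Real.sqrt (4 - (eQ μ n * (x₁ - aQ μ n)) ^ 2))
              (Real.sqrt (4 - (eQ μ n * (x₂ - aQ μ n)) ^ 2)) := by
  obtain ⟨c', hc'pos, hexpE⟩ := hexp
  have hb0 : Tendsto (fun n : ℕ => bQ μ n) atTop (𝓝 0) := by
    simpa [bQ] using tendsto_const_div_atTop_nhds_zero_nat (mom μ 4 - (mom μ 3)^2 - 1)
  have hd0 : Tendsto (fun n : ℕ => dQ μ n) atTop (𝓝 0) := by
    simpa [dQ] using tendsto_const_div_atTop_nhds_zero_nat (mom μ 4 - (mom μ 3)^2)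
  have hbEv : ∀ᶠ n in atTop, |bQ μ n| ≤ 1/2 := by
    have := hb0.eventually (Metric.ball_mem_nhds (0:ℝ) (by norm_num : (0:ℝ) < 1/2))
    filter_upwards [this] with n hn
    simp only [Metric.mem_ball, Real.dist_eq, sub_zero] at hn
    linarith
  have hdEv : ∀ᶠ n in atTop, |dQ μ n| ≤ 1/2 := by
    have := hd0.eventually (Metric.ball_mem_nhds (0:ℝ) (by norm_num : (0:ℝ) < 1/2))
    filter_upwards [this] with n hn
    simp only [Metric.mem_ball, Real.dist_eq, sub_zero] at hn
    linarith
  have hAll := ((hMF.and hMeq).and (hexpE.and hTb)).and ((hbEv.and hdEv).and (eventually_ge_atTop 1))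
  rw [eventually_atTop] at hAll
  obtain ⟨n₁, hn₁⟩ := hAll
  refine ⟨18 + 2*c', by linarith, n₁, ?_⟩
  intro n hn x₁ x₂ hx₁ hx₂
  obtain ⟨⟨⟨hMFn, hMeqn⟩, hexpn, hTbn⟩, ⟨hbn, hdn⟩, hn1⟩ := hn₁ n hn
  obtain ⟨hTbc, hTbeq⟩ := hTbn
  obtain ⟨νM, hνMP, hνM⟩ := hMFn
  haveI := hνMP
  clear hexpE hTb hMeq hMF hbEv hdEv hb0 hd0 hboxW hμs hμsP hτ h8 h1 h2 hn hn₁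
  set a := aQ μ n with hadef
  set b := bQ μ n with hbdef
  set d := dQ μ n with hddef
  set e := eQ μ n with hedef
  set hpow := (n : ℝ) ^ (-(3/2) : ℝ) with hpowdef
  set h' := c₂ * hpow with hh'
  clear_value a b d e hpow h'
  have hnR : (1:ℝ) ≤ (n:ℝ) := by exact_mod_cast hn1
  have hnpos : (0:ℝ) < (n:ℝ) := by linarith
  have hpowpos : 0 < hpow := by rw [hpowdef]; exact Real.rpow_pos_of_pos hnpos _
  have hb' := abs_le.mp hbn
  have hd' := abs_le.mp hdn
  have h1b : (1/2:ℝ) ≤ 1 - b := by linarith [hb'.2]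
  have h1b' : 1 - b ≤ 3/2 := by linarith [hb'.1]
  have h1d : (1/2:ℝ) ≤ 1 - d := by linarith [hd'.2]
  have h1d' : 1 - d ≤ 3/2 := by linarith [hd'.1]
  have hsd_lb : (1/2:ℝ) ≤ Real.sqrt (1 - d) := by
    rw [show (1/2:ℝ) = Real.sqrt ((1/2)^2) by rw [Real.sqrt_sq]; norm_num]
    exact Real.sqrt_le_sqrt (by nlinarith)
  have hsd_ub : Real.sqrt (1 - d) ≤ 3/2 := by
    rw [show (3/2:ℝ) = Real.sqrt ((3/2)^2) by rw [Real.sqrt_sq]; norm_num]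
    exact Real.sqrt_le_sqrt (by nlinarith)
  have hsdpos : (0:ℝ) < Real.sqrt (1-d) := by linarith
  have hE : e = (1-b)/Real.sqrt (1-d) := by rw [hedef, hbdef, hddef]; rfl
  have he_lb : (1/3:ℝ) ≤ e := by
    rw [hE, le_div_iff₀ hsdpos]; linarith
  have he_ub : e ≤ 3 := by
    rw [hE, div_le_iff₀ hsdpos]; linarith
  have hepos : 0 < e := by linarith
  have hh'pos : 0 < h' := by
    rw [hh']
    have hp : 0 < hpow := by rw [hpowdef]; exact Real.rpow_pos_of_pos (by linarith) _
    exact mul_pos hc₂ hp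
  have heh : e * h' ≤ 2 := by
    have h0 : (0:ℝ) ≤ 2/e - h' := le_trans (abs_nonneg _) hx₁
    have h1 : h' ≤ 2/e := by linarith
    have h2 := (le_div_iff₀ hepos).mp h1
    calc e * h' = h' * e := mul_comm _ _
      _ ≤ 2 := h2
  have hq : ∀ x : ℝ, |x - a| ≤ 2/e - h' → 2*(e*h') ≤ 4 - (e*(x-a))^2 := by
    intro x hx
    have h1 : e*|x-a| ≤ e*(2/e - h') := mul_le_mul_of_nonneg_left hx (le_of_lt hepos)
    have he2 : e * (2/e) = 2 := by field_simp
    have h1' : e*|x-a| ≤ 2 - e*h' := by rw [mul_sub, he2] at h1; linarith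
    have h2 : |e*(x-a)| ≤ 2 - e*h' := by rw [abs_mul, abs_of_pos hepos]; exact h1'
    exact auxq e h' (x-a) hepos hh'pos heh h2
  have hq₁ := hq x₁ hx₁
  have hq₂ := hq x₂ hx₂
  have hehpos : 0 < e*h' := mul_pos hepos hh'pos
  have hqpos₁ : 0 < 4 - (e*(x₁-a))^2 := by nlinarith
  have hqpos₂ : 0 < 4 - (e*(x₂-a))^2 := by nlinarith
  set m₁ := Real.sqrt (4 - (e*(x₁-a))^2) with hm₁def
  set m₂ := Real.sqrt (4 - (e*(x₂-a))^2) with hm₂def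
  set mm := min m₁ m₂ with hmmdef
  have hm₁pos : 0 < m₁ := Real.sqrt_pos.mpr hqpos₁
  have hm₂pos : 0 < m₂ := Real.sqrt_pos.mpr hqpos₂
  have hmmpos : 0 < mm := lt_min hm₁pos hm₂pos
  have hmm2 : mm ≤ 2 := by
    refine le_trans (min_le_left _ _) ?_
    rw [hm₁def, show (2:ℝ) = Real.sqrt (2^2) by rw [Real.sqrt_sq]; norm_num]
    exact Real.sqrt_le_sqrt (by nlinarith [sq_nonneg (e*(x₁-a))])
  have hid : e^2*(1-d) = (1-b)^2 := by
    have hsq1d : Real.sqrt (1-d)^2 = 1-d := Real.sq_sqrt (by linarith)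
    rw [hE, div_pow, hsq1d]
    field_simp
  -- key bound for each ε
  have hkey : ∀ ε : ℝ, ε ∈ Ioc (0:ℝ) 1 →
      ‖(Tb n ((x₁:ℂ)+ε*I) - Tb n ((x₂:ℂ)+ε*I))‖
        ≤ (18+2*c') * (|x₁-x₂| + hpow) / mm := by
    intro ε hε
    obtain ⟨hε0, hε1⟩ := hε
    have him : ∀ x : ℝ, ((x:ℂ)+ε*I).im = ε := fun x => by simp
    have hre : ∀ x : ℝ, ((x:ℂ)+ε*I).re = x := fun x => by simp
    have hMim : ∀ x : ℝ, ε ≤ (M n ((x:ℂ)+ε*I)).im := by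
      intro x
      rw [hνM _ (by rw [him]; exact hε0)]
      have := im_recip_ge νM ((x:ℂ)+ε*I) (by rw [him]; exact hε0)
      rwa [him] at this
    set s : ℝ → ℂ := fun x => 2*(M n ((x:ℂ)+ε*I) - (a:ℂ)) - (1+(b:ℂ))*(((x:ℂ)+ε*I) - (a:ℂ)) with hs
    have hsim_eq : ∀ x : ℝ, (s x).im = 2*(M n ((x:ℂ)+ε*I)).im - (1+b)*ε := by
      intro x; rw [hs]; simp [Complex.mul_im, Complex.mul_re]
    have hsim_pos : ∀ x : ℝ, 0 < (s x).im := fun x => by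
      rw [hsim_eq]; exact auxpos _ _ _ (hMim x) hb'.2 hε0
    have hssq : ∀ x : ℝ, (s x)^2 = (1-(b:ℂ))^2*(((x:ℂ)+ε*I) - (a:ℂ))^2 - 4*(1-(d:ℂ)) := by
      intro x; rw [hs]; exact hMeqn _ (by rw [him]; exact hε0)
    have hsim_lb : ∀ x : ℝ, |x - a| ≤ 2/e - h' →
        Real.sqrt (1-d) * Real.sqrt (4 - (e*(x-a))^2) ≤ (s x).im := by
      intro x hx
      have hre2 : ((s x)^2).re = (s x).re^2 - (s x).im^2 := by
        simp only [pow_two, Complex.mul_re]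
      have hDre : ((1-(b:ℂ))^2*(((x:ℂ)+ε*I) - (a:ℂ))^2 - 4*(1-(d:ℂ))).re
          = (1-b)^2*((x-a)^2-ε^2) - 4*(1-d) := by
        simp only [pow_two, Complex.mul_re, Complex.mul_im, Complex.sub_re, Complex.sub_im,
          Complex.add_re, Complex.add_im, Complex.one_re, Complex.one_im, Complex.ofReal_re,
          Complex.ofReal_im, Complex.I_re, Complex.I_im, Complex.re_ofNat, Complex.im_ofNat]
        ring
      have h1 : (s x).re^2 - (s x).im^2 = (1-b)^2*((x-a)^2-ε^2) - 4*(1-d) := by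
        rw [← hre2, hssq x, hDre]
      have h2 : (1-d)*(4 - (e*(x-a))^2) ≤ (s x).im^2 :=
        auxim ((s x).re) ((s x).im) (1-b) (1-d) e (x-a) ε h1 hid (by linarith)
      calc Real.sqrt (1-d) * Real.sqrt (4-(e*(x-a))^2)
          = Real.sqrt ((1-d)*(4-(e*(x-a))^2)) := (Real.sqrt_mul (by linarith) _).symm
        _ ≤ Real.sqrt ((s x).im^2) := Real.sqrt_le_sqrt h2
        _ = (s x).im := Real.sqrt_sq (le_of_lt (hsim_pos x))
    have hsim_lb₁ : mm/2 ≤ (s x₁).im := by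
      have h0 := hsim_lb x₁ hx₁
      rw [← hm₁def] at h0
      exact auxhalf _ _ _ _ h0 hsd_lb (min_le_left _ _) hm₁pos
    have hsim_lb₂ : mm/2 ≤ (s x₂).im := by
      have h0 := hsim_lb x₂ hx₂
      rw [← hm₂def] at h0
      exact auxhalf _ _ _ _ h0 hsd_lb (min_le_right _ _) hm₂pos
    have hsum_lb : mm ≤ ‖(s x₁ + s x₂)‖ := by
      calc mm = mm/2 + mm/2 := by ring
        _ ≤ (s x₁).im + (s x₂).im := add_le_add hsim_lb₁ hsim_lb₂
        _ = (s x₁ + s x₂).im := by simp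
        _ ≤ |(s x₁ + s x₂).im| := le_abs_self _
        _ ≤ ‖(s x₁ + s x₂)‖ := Complex.abs_im_le_norm _
    have hsne : s x₁ + s x₂ ≠ 0 := by
      intro h; rw [h] at hsum_lb; simp at hsum_lb; linarith
    have hfactor : (s x₁ - s x₂) * (s x₁ + s x₂)
        = (1-(b:ℂ))^2 * ((x₁-x₂:ℝ):ℂ) * ((((x₁:ℂ)+ε*I) - (a:ℂ)) + (((x₂:ℂ)+ε*I) - (a:ℂ))) := by
      have h1 : (s x₁ - s x₂)*(s x₁+s x₂) = (s x₁)^2 - (s x₂)^2 := by ring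
      rw [h1, hssq x₁, hssq x₂]
      push_cast
      ring
    have hzabs : ∀ x : ℝ, |x - a| ≤ 2/e - h' → ‖(((x:ℂ)+ε*I) - (a:ℂ))‖ ≤ 7 := by
      intro x hx
      rw [show ((x:ℂ)+ε*I) - (a:ℂ) = ((x - a:ℝ):ℂ) + (ε:ℂ)*I by push_cast; ring]
      calc ‖(((x - a:ℝ):ℂ) + (ε:ℂ)*I)‖
          ≤ ‖((x-a:ℝ):ℂ)‖ + ‖((ε:ℂ)*I)‖ := norm_add_le _ _
        _ = |x-a| + |ε| := by rw [Complex.norm_real, Real.norm_eq_abs]; simp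
        _ ≤ (2/e - h') + 1 := by
            have : |ε| = ε := abs_of_pos hε0
            rw [this]; exact add_le_add hx hε1
        _ ≤ 7 := by
            have : 2/e ≤ 6 := by rw [div_le_iff₀ hepos]; linarith
            linarith [hh'pos]
    have habs_sdiff : ‖(s x₁ - s x₂)‖ ≤ 32 * |x₁-x₂|/mm := by
      have h1 : ‖(s x₁ - s x₂)‖ * ‖(s x₁ + s x₂)‖
          = ‖((1-(b:ℂ))^2 * ((x₁-x₂:ℝ):ℂ)
            * ((((x₁:ℂ)+ε*I) - (a:ℂ)) + (((x₂:ℂ)+ε*I) - (a:ℂ))))‖ := by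
        rw [← norm_mul, hfactor]
      have h2 : ‖((1-(b:ℂ))^2 * ((x₁-x₂:ℝ):ℂ)
            * ((((x₁:ℂ)+ε*I) - (a:ℂ)) + (((x₂:ℂ)+ε*I) - (a:ℂ))))‖ ≤ (9/4) * (|x₁-x₂| * 14) := by
        rw [norm_mul, norm_mul]
        have hb2 : ‖((1-(b:ℂ))^2)‖ ≤ 9/4 := by
          rw [show (1-(b:ℂ)) = ((1-b:ℝ):ℂ) by push_cast; ring, ← Complex.ofReal_pow,
            Complex.norm_real, Real.norm_eq_abs]
          rw [_root_.abs_of_nonneg (by positivity : (0:ℝ) ≤ (1-b)^2)]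
          exact auxsq _ h1b h1b'
        have hxx : ‖((x₁-x₂:ℝ):ℂ)‖ = |x₁-x₂| := by rw [Complex.norm_real, Real.norm_eq_abs]
        have hzz : ‖((((x₁:ℂ)+ε*I) - (a:ℂ)) + (((x₂:ℂ)+ε*I) - (a:ℂ)))‖ ≤ 14 := by
          calc ‖((((x₁:ℂ)+ε*I) - (a:ℂ)) + (((x₂:ℂ)+ε*I) - (a:ℂ)))‖
              ≤ ‖(((x₁:ℂ)+ε*I) - (a:ℂ))‖ + ‖(((x₂:ℂ)+ε*I) - (a:ℂ))‖ :=
                norm_add_le _ _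
            _ ≤ 7 + 7 := add_le_add (hzabs x₁ hx₁) (hzabs x₂ hx₂)
            _ = 14 := by norm_num
        calc ‖((1-(b:ℂ))^2)‖ * ‖((x₁-x₂:ℝ):ℂ)‖
              * ‖((((x₁:ℂ)+ε*I) - (a:ℂ)) + (((x₂:ℂ)+ε*I) - (a:ℂ)))‖
            ≤ (9/4) * |x₁-x₂| * 14 := by
              apply mul_le_mul
              · apply mul_le_mul hb2 (le_of_eq hxx) (norm_nonneg _) (by norm_num)
              · exact hzz
              · exact norm_nonneg _
              · positivity
          _ = (9/4) * (|x₁-x₂| * 14) := by ring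
      rw [le_div_iff₀ hmmpos]
      calc ‖(s x₁ - s x₂)‖ * mm
          ≤ ‖(s x₁ - s x₂)‖ * ‖(s x₁ + s x₂)‖ := by
            apply mul_le_mul_of_nonneg_left hsum_lb (norm_nonneg _)
        _ ≤ (9/4) * (|x₁-x₂| * 14) := h1 ▸ h2
        _ ≤ 32 * |x₁-x₂| := by linarith [abs_nonneg (x₁-x₂)]
    have hMdiffeq : M n ((x₁:ℂ)+ε*I) - M n ((x₂:ℂ)+ε*I)
        = ((1+(b:ℂ))*((x₁-x₂:ℝ):ℂ) + (s x₁ - s x₂))/2 := by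
      rw [hs]
      push_cast
      ring
    have hMdiff : ‖(M n ((x₁:ℂ)+ε*I) - M n ((x₂:ℂ)+ε*I))‖ ≤ 18 * |x₁-x₂|/mm := by
      rw [hMdiffeq, norm_div, Complex.norm_two]
      have h1 : ‖((1+(b:ℂ))*((x₁-x₂:ℝ):ℂ) + (s x₁ - s x₂))‖
          ≤ (3/2) * |x₁-x₂| + 32 * |x₁-x₂|/mm := by
        calc ‖((1+(b:ℂ))*((x₁-x₂:ℝ):ℂ) + (s x₁ - s x₂))‖
            ≤ ‖((1+(b:ℂ))*((x₁-x₂:ℝ):ℂ))‖ + ‖(s x₁ - s x₂)‖ :=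
              norm_add_le _ _
          _ ≤ (3/2) * |x₁-x₂| + 32 * |x₁-x₂|/mm := by
              apply add_le_add _ habs_sdiff
              rw [norm_mul, show (1+(b:ℂ)) = ((1+b:ℝ):ℂ) by push_cast; ring,
                Complex.norm_real, Real.norm_eq_abs, Complex.norm_real, Real.norm_eq_abs]
              have hob : |1+b| ≤ 3/2 := by rw [abs_le]; constructor <;> linarith
              exact mul_le_mul_of_nonneg_right hob (abs_nonneg (x₁-x₂))
      have h2 : ((3/2) * |x₁-x₂| + 32 * |x₁-x₂|/mm)/2 ≤ 18 * |x₁-x₂|/mm := by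
        rw [div_le_div_iff₀ (by norm_num : (0:ℝ) < 2) hmmpos]
        rw [add_mul, div_mul_cancel₀ _ (ne_of_gt hmmpos)]
        exact auxcomb _ _ (abs_nonneg (x₁-x₂)) hmm2 hmmpos
      calc ‖((1+(b:ℂ))*((x₁-x₂:ℝ):ℂ) + (s x₁ - s x₂))‖/2
          ≤ ((3/2) * |x₁-x₂| + 32 * |x₁-x₂|/mm)/2 := by linarith
        _ ≤ 18 * |x₁-x₂|/mm := h2
    -- bound |Tfun - M|
    have hTM : ∀ x : ℝ, |x - a| ≤ 2/e - h' → mm ≤ Real.sqrt (4-(e*(x-a))^2) →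
        ‖(Tfun W n ((x:ℂ)+ε*I) - M n ((x:ℂ)+ε*I))‖ ≤ c' * hpow / mm := by
      intro x hx hmmx
      have h0 := hexpn ((x:ℂ)+ε*I) (by rw [him]; exact hε0) (by rw [him]; linarith)
        (by rw [hre]; exact hx)
      have hA : (0:ℝ) < (n:ℝ)^((3:ℝ)/2) := Real.rpow_pos_of_pos hnpos _
      have habs_lb : Real.sqrt (4-(e*(x-a))^2)
          ≤ Real.sqrt (‖(((e:ℂ)*(((x:ℂ)+ε*I) - (a:ℂ)))^2 - 4)‖) := by
        apply Real.sqrt_le_sqrt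
        have hre' : ((((e:ℂ)*(((x:ℂ)+ε*I) - (a:ℂ)))^2) - 4).re = e^2*((x-a)^2-ε^2) - 4 := by
          simp only [pow_two, Complex.mul_re, Complex.mul_im, Complex.sub_re, Complex.sub_im,
            Complex.add_re, Complex.add_im, Complex.ofReal_re,
            Complex.ofReal_im, Complex.I_re, Complex.I_im, Complex.re_ofNat, Complex.im_ofNat]
          ring
        calc 4-(e*(x-a))^2
            ≤ -(((((e:ℂ)*(((x:ℂ)+ε*I) - (a:ℂ)))^2) - 4).re) := by
              rw [hre']; exact auxre e (x-a) ε
          _ ≤ |(((((e:ℂ)*(((x:ℂ)+ε*I) - (a:ℂ)))^2) - 4)).re| := neg_le_abs _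
          _ ≤ ‖((((e:ℂ)*(((x:ℂ)+ε*I) - (a:ℂ)))^2) - 4)‖ := Complex.abs_re_le_norm _
      have hS : mm ≤ Real.sqrt (‖(((e:ℂ)*(((x:ℂ)+ε*I) - (a:ℂ)))^2 - 4)‖) :=
        le_trans hmmx habs_lb
      have h1 : c' / ((n:ℝ)^((3:ℝ)/2)
            * Real.sqrt (‖(((e:ℂ)*(((x:ℂ)+ε*I) - (a:ℂ)))^2 - 4)‖))
          ≤ c' / ((n:ℝ)^((3:ℝ)/2) * mm) := by
        gcongr
      have h2 : c' / ((n:ℝ)^((3:ℝ)/2) * mm) = c' * hpow / mm := by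
        rw [hpowdef, Real.rpow_neg (le_of_lt hnpos)]
        field_simp
      linarith [le_trans h0 h1, h2 ▸ le_trans h0 h1]
    have hTM₁ := hTM x₁ hx₁ (by rw [← hm₁def]; exact min_le_left _ _)
    have hTM₂ := hTM x₂ hx₂ (by rw [← hm₂def]; exact min_le_right _ _)
    have hTb₁ : Tb n ((x₁:ℂ)+ε*I) = Tfun W n ((x₁:ℂ)+ε*I) := hTbeq _ (by rw [him]; exact hε0)
    have hTb₂ : Tb n ((x₂:ℂ)+ε*I) = Tfun W n ((x₂:ℂ)+ε*I) := hTbeq _ (by rw [him]; exact hε0)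
    calc ‖(Tb n ((x₁:ℂ)+ε*I) - Tb n ((x₂:ℂ)+ε*I))‖
        = ‖((Tfun W n ((x₁:ℂ)+ε*I) - M n ((x₁:ℂ)+ε*I))
            + (M n ((x₁:ℂ)+ε*I) - M n ((x₂:ℂ)+ε*I))
            + (M n ((x₂:ℂ)+ε*I) - Tfun W n ((x₂:ℂ)+ε*I)))‖ := by
          rw [hTb₁, hTb₂]; ring_nf
      _ ≤ ‖((Tfun W n ((x₁:ℂ)+ε*I) - M n ((x₁:ℂ)+ε*I))
            + (M n ((x₁:ℂ)+ε*I) - M n ((x₂:ℂ)+ε*I)))‖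
          + ‖(M n ((x₂:ℂ)+ε*I) - Tfun W n ((x₂:ℂ)+ε*I))‖ := norm_add_le _ _
      _ ≤ ‖(Tfun W n ((x₁:ℂ)+ε*I) - M n ((x₁:ℂ)+ε*I))‖
          + ‖(M n ((x₁:ℂ)+ε*I) - M n ((x₂:ℂ)+ε*I))‖
          + ‖(M n ((x₂:ℂ)+ε*I) - Tfun W n ((x₂:ℂ)+ε*I))‖ := by
          have := norm_add_le (Tfun W n ((x₁:ℂ)+ε*I) - M n ((x₁:ℂ)+ε*I))
            (M n ((x₁:ℂ)+ε*I) - M n ((x₂:ℂ)+ε*I))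
          linarith
      _ ≤ c' * hpow / mm + 18 * |x₁-x₂|/mm + c' * hpow / mm := by
          have habs_comm : ‖(M n ((x₂:ℂ)+ε*I) - Tfun W n ((x₂:ℂ)+ε*I))‖
              = ‖(Tfun W n ((x₂:ℂ)+ε*I) - M n ((x₂:ℂ)+ε*I))‖ :=
            norm_sub_rev _ _
          rw [habs_comm]
          exact add_le_add (add_le_add hTM₁ hMdiff) hTM₂
      _ = (18 * |x₁-x₂| + 2*(c'*hpow))/mm := by ring
      _ ≤ (18+2*c') * (|x₁-x₂| + hpow) / mm := by
          gcongr
          exact auxfin _ _ _ (abs_nonneg (x₁-x₂)) (le_of_lt hpowpos) hc'pos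
  -- limit ε → 0⁺
  have hmem : ∀ x : ℝ, ((x:ℂ)) ∈ {z : ℂ | 0 ≤ z.im} := fun x => by simp [Set.mem_setOf_eq]
  have hmap : ∀ x : ℝ, Tendsto (fun ε : ℝ => (x:ℂ)+ε*I) (𝓝[>] (0:ℝ))
      (𝓝[{z : ℂ | 0 ≤ z.im}] (x:ℂ)) := by
    intro x
    rw [tendsto_nhdsWithin_iff]
    constructor
    · have hcont : Continuous (fun ε : ℝ => (x:ℂ)+ε*I) := by continuity
      have h0 := hcont.tendsto 0
      simp only [Complex.ofReal_zero, zero_mul, add_zero] at h0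
      exact h0.mono_left nhdsWithin_le_nhds
    · filter_upwards [self_mem_nhdsWithin] with ε hε
      simp only [Set.mem_setOf_eq, Complex.add_im, Complex.ofReal_im, Complex.mul_im,
        Complex.ofReal_re, Complex.I_im, Complex.I_re, mul_zero, mul_one, zero_add]
      simp only [Set.mem_Ioi] at hε
      linarith
  have h₁ : Tendsto (fun ε : ℝ => Tb n ((x₁:ℂ)+ε*I)) (𝓝[>] (0:ℝ)) (𝓝 (Tb n (x₁:ℂ))) :=
    Filter.Tendsto.comp (hTbc _ (hmem x₁)) (hmap x₁)
  have h₂ : Tendsto (fun ε : ℝ => Tb n ((x₂:ℂ)+ε*I)) (𝓝[>] (0:ℝ)) (𝓝 (Tb n (x₂:ℂ))) :=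
    Filter.Tendsto.comp (hTbc _ (hmem x₂)) (hmap x₂)
  have hlim : Tendsto (fun ε : ℝ => ‖(Tb n ((x₁:ℂ)+ε*I) - Tb n ((x₂:ℂ)+ε*I))‖)
      (𝓝[>] (0:ℝ)) (𝓝 (‖(Tb n (x₁:ℂ) - Tb n (x₂:ℂ))‖)) :=
    Filter.Tendsto.comp (continuous_norm.tendsto _) (h₁.sub h₂)
  refine le_of_tendsto hlim ?_
  filter_upwards [Ioc_mem_nhdsGT_of_mem (Set.mem_Ico.mpr ⟨le_refl (0:ℝ), zero_lt_one⟩)] with ε hε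
  exact hkey ε hε


end FreeCLT
end
end
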